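/- Let X_1,…,X_m be Hermitian N×N complex matrices, let P be an N×N complex matrix, let S > 0, and let F : ℝ → ℂ be integrable with ∫ F(t) dt = 1 and ∫ |t|·|F(t)| dt < ∞. Suppose ‖[P, X_j]‖ ≤ ε for all j. Define H = S^m ∫_{ℝ^m} (∏_{j=1}^m F(S a_j)) · exp(i Σ_j a_j X_j) P exp(−i Σ_j a_j X_j) da. Then ‖H − P‖ ≤ (m ε / S) · (∫ |t|·|F(t)| dt) · (∫ |F(t)| dt)^{m−1}. -/

import Mathlib

open MeasureTheory NormedSpace

section helpers

variable {E : Type*} [NormedAddCommGroup E] [InnerProductSpace ℂ E] [CompleteSpace E]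

lemma my_hasDerivAt_comp_ofReal {A : Type*} [NormedAddCommGroup A] [NormedSpace ℂ A]
    {g : ℂ → A} {g' : A} {x : ℝ} (h : HasDerivAt g g' (x : ℂ)) :
    HasDerivAt (fun u : ℝ => g u) g' x := by
  have h1 := h.hasFDerivAt
  have h2 := (h1.restrictScalars ℝ).comp x Complex.ofRealCLM.hasFDerivAt
  have h3 := h2.hasDerivAt
  simpa [Function.comp_def] using h3

lemma my_norm_exp_le_one {B : E →L[ℂ] E} (hB : star B = -B) : ‖exp B‖ ≤ 1 := by
  let +nondep : NormedAlgebra ℚ (E →L[ℂ] E) := .restrictScalars ℚ ℂ _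
  have hu : exp B ∈ unitary (E →L[ℂ] E) :=
    exp_mem_unitary_of_mem_skewAdjoint (skewAdjoint.mem_iff.mpr hB)
  have h1 : star (exp B) * exp B = 1 := (Unitary.mem_iff.mp hu).1
  have h2 : ‖exp B‖ * ‖exp B‖ = ‖(1 : E →L[ℂ] E)‖ := by
    rw [← CStarRing.norm_star_mul_self, h1]
  have h3 : ‖(1 : E →L[ℂ] E)‖ ≤ 1 := by
    rw [ContinuousLinearMap.one_def]; exact ContinuousLinearMap.norm_id_le
  nlinarith [norm_nonneg (exp B)]

lemma my_conj_sub_le (T P : E →L[ℂ] E) (hT : IsSelfAdjoint T) :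
    ‖exp (Complex.I • T) * P * exp (-(Complex.I • T)) - P‖ ≤ ‖P * T - T * P‖ := by
  let +nondep : NormedAlgebra ℚ (E →L[ℂ] E) := .restrictScalars ℚ ℂ _
  set B := Complex.I • T with hBdef
  have hB : star B = -B := skewAdjoint.mem_iff.mp (hT.smul_mem_skewAdjoint Complex.conj_I)
  have hle : ∀ s : ℝ, ‖exp ((s : ℂ) • B)‖ ≤ 1 := by
    intro s
    refine my_norm_exp_le_one ?_
    rw [star_smul, hB, Complex.star_def, Complex.conj_ofReal, smul_neg]
  have hle' : ∀ s : ℝ, ‖exp ((s : ℂ) • (-B))‖ ≤ 1 := by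
    intro s
    refine my_norm_exp_le_one ?_
    rw [star_smul, star_neg, hB, Complex.star_def, Complex.conj_ofReal, neg_neg, smul_neg, neg_neg]
  set f : ℝ → (E →L[ℂ] E) := fun s => exp ((s : ℂ) • B) * P * exp ((s : ℂ) • (-B)) with hf
  set f' : ℝ → (E →L[ℂ] E) :=
    fun s => exp ((s : ℂ) • B) * (B * P - P * B) * exp ((s : ℂ) • (-B)) with hf'
  have hderiv : ∀ s : ℝ, HasDerivAt f (f' s) s := by
    intro s
    have h1 : HasDerivAt (fun u : ℝ => exp ((u : ℂ) • B)) (exp ((s : ℂ) • B) * B) s :=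
      my_hasDerivAt_comp_ofReal (hasDerivAt_exp_smul_const B (s : ℂ))
    have h2 : HasDerivAt (fun u : ℝ => exp ((u : ℂ) • (-B))) (-B * exp ((s : ℂ) • (-B))) s :=
      my_hasDerivAt_comp_ofReal (hasDerivAt_exp_smul_const' (-B) (s : ℂ))
    have h3 := (h1.mul_const P).mul h2
    refine h3.congr_deriv ?_
    rw [hf']
    noncomm_ring
  have hDeq : ‖B * P - P * B‖ = ‖P * T - T * P‖ := by
    have h4 : B * P - P * B = Complex.I • (T * P - P * T) := by
      rw [hBdef, smul_mul_assoc, mul_smul_comm, ← smul_sub]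
    rw [h4, norm_smul, Complex.norm_I, one_mul, ← norm_neg, neg_sub]
  have hbound : ∀ s ∈ Set.Ico (0 : ℝ) 1, ‖f' s‖ ≤ ‖P * T - T * P‖ := by
    intro s _
    rw [← hDeq]
    have h4 : ‖f' s‖ ≤ ‖exp ((s : ℂ) • B)‖ * ‖B * P - P * B‖ * ‖exp ((s : ℂ) • (-B))‖ :=
      (norm_mul_le _ _).trans (mul_le_mul_of_nonneg_right (norm_mul_le _ _) (norm_nonneg _))
    calc ‖f' s‖ ≤ ‖exp ((s : ℂ) • B)‖ * ‖B * P - P * B‖ * ‖exp ((s : ℂ) • (-B))‖ := h4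
      _ ≤ 1 * ‖B * P - P * B‖ * 1 := by
          gcongr
          · exact hle s
          · exact hle' s
      _ = ‖B * P - P * B‖ := by ring
  have key := norm_image_sub_le_of_norm_deriv_le_segment_01'
    (fun s _ => (hderiv s).hasDerivWithinAt) hbound
  have hf1 : f 1 = exp B * P * exp (-B) := by
    rw [hf]; norm_num
  have hf0 : f 0 = P := by
    rw [hf]; norm_num [exp_zero]
  rw [hf1, hf0] at key
  simpa using key

end helpers

set_option maxHeartbeats 1000000 in
set_option synthInstance.maxHeartbeats 1000000 in
private lemma stmt9_aux {N k : ℕ}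
    (P : EuclideanSpace ℂ (Fin N) →L[ℂ] EuclideanSpace ℂ (Fin N))
    (S : ℝ) (hS : 0 < S)
    (F : ℝ → ℂ) (hFint : Integrable F)
    (hFone : ∫ t : ℝ, F t = 1)
    (hFmom : Integrable (fun t : ℝ => |t| * ‖F t‖))
    (ε : ℝ)
    (A : (Fin (k+1) → ℝ) → (EuclideanSpace ℂ (Fin N) →L[ℂ] EuclideanSpace ℂ (Fin N)))
    (hAsa : ∀ a, IsSelfAdjoint (A a))
    (hAcont : Continuous A)
    (hAcomm : ∀ a, ‖P * A a - A a * P‖ ≤ ε * ∑ j, |a j|) :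
    ‖(S ^ (k+1) • ∫ a : Fin (k+1) → ℝ, (∏ j, F (S * a j)) •
        (exp (Complex.I • A a) * P * exp (-(Complex.I • A a)))) - P‖
      ≤ ((k+1 : ℝ) * ε / S) * (∫ t : ℝ, |t| * ‖F t‖) *
          (∫ t : ℝ, ‖F t‖) ^ k := by
  have hS0 : S ≠ 0 := ne_of_gt hS
  let +nondep : NormedAlgebra ℚ (EuclideanSpace ℂ (Fin N) →L[ℂ] EuclideanSpace ℂ (Fin N)) :=
    .restrictScalars ℚ ℂ _
  set M1 : ℝ := ∫ t : ℝ, |t| * ‖F t‖ with hM1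
  set M0 : ℝ := ∫ t : ℝ, ‖F t‖ with hM0
  -- commutator bound
  have hUb : ∀ a : Fin (k+1) → ℝ,
      ‖exp (Complex.I • A a) * P * exp (-(Complex.I • A a)) - P‖ ≤ ε * ∑ j, |a j| :=
    fun a => (my_conj_sub_le (A a) P (hAsa a)).trans (hAcomm a)
  -- unitarity bounds
  have hUnorm : ∀ a : Fin (k+1) → ℝ,
      ‖exp (Complex.I • A a) * P * exp (-(Complex.I • A a))‖ ≤ ‖P‖ := by
    intro a
    have hBm : Complex.I • A a ∈
        skewAdjoint (EuclideanSpace ℂ (Fin N) →L[ℂ] EuclideanSpace ℂ (Fin N)) :=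
      (hAsa a).smul_mem_skewAdjoint Complex.conj_I
    have hB : star (Complex.I • A a) = -(Complex.I • A a) := skewAdjoint.mem_iff.mp hBm
    have h1 : ‖exp (Complex.I • A a)‖ ≤ 1 := my_norm_exp_le_one hB
    have h2 : ‖exp (-(Complex.I • A a))‖ ≤ 1 :=
      my_norm_exp_le_one (by rw [star_neg, hB, neg_neg])
    calc ‖exp (Complex.I • A a) * P * exp (-(Complex.I • A a))‖
        ≤ ‖exp (Complex.I • A a)‖ * ‖P‖ * ‖exp (-(Complex.I • A a))‖ :=
          (norm_mul_le _ _).trans (mul_le_mul_of_nonneg_right (norm_mul_le _ _) (norm_nonneg _))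
      _ ≤ 1 * ‖P‖ * 1 := by gcongr
      _ = ‖P‖ := by ring
  -- continuity of U
  have hUcont : Continuous (fun a : Fin (k+1) → ℝ =>
      exp (Complex.I • A a) * P * exp (-(Complex.I • A a))) :=
    ((exp_continuous.comp (hAcont.const_smul Complex.I)).mul continuous_const).mul
      (exp_continuous.comp ((hAcont.const_smul Complex.I).neg))
  -- integrability of the scalar weight
  have hFS : Integrable fun t : ℝ => F (S * t) := hFint.comp_mul_left' hS0
  have hprodF : Integrable fun a : Fin (k+1) → ℝ => ∏ j, F (S * a j) :=
    Integrable.fintype_prod (f := fun (_ : Fin (k+1)) (t : ℝ) => F (S * t)) fun _ => hFS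
  have hGint : Integrable (fun a : Fin (k+1) → ℝ => (∏ j, F (S * a j)) •
      (exp (Complex.I • A a) * P * exp (-(Complex.I • A a)))) := by
    have := hprodF.smul_of_top_left
      (memLp_top_of_bound hUcont.aestronglyMeasurable ‖P‖ (Filter.Eventually.of_forall hUnorm))
    exact this
  have hGPint : Integrable (fun a : Fin (k+1) → ℝ => (∏ j, F (S * a j)) • P) :=
    hprodF.smul_const P
  have hGDint : Integrable (fun a : Fin (k+1) → ℝ => (∏ j, F (S * a j)) •
      (exp (Complex.I • A a) * P * exp (-(Complex.I • A a)) - P)) := by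
    have := hGint.sub hGPint
    exact this.congr (Filter.Eventually.of_forall fun a => by simp [smul_sub])
  -- splitting the integral
  have hsplit : (∫ a : Fin (k+1) → ℝ, (∏ j, F (S * a j)) •
        (exp (Complex.I • A a) * P * exp (-(Complex.I • A a))))
      = (∫ a : Fin (k+1) → ℝ, (∏ j, F (S * a j)) •
          (exp (Complex.I • A a) * P * exp (-(Complex.I • A a)) - P))
        + (∫ a : Fin (k+1) → ℝ, (∏ j, F (S * a j)) • P) := by
    rw [← integral_add hGDint hGPint]
    congr 1
    funext a
    rw [smul_sub, sub_add_cancel]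
  have hconstint : (∫ a : Fin (k+1) → ℝ, (∏ j, F (S * a j)) • P)
      = (((S : ℂ)⁻¹) ^ (k+1)) • P := by
    rw [integral_smul_const]
    congr 1
    rw [volume_pi, integral_fintype_prod_eq_pow (ι := Fin (k+1)) (f := fun t : ℝ => F (S * t))]
    have hone : (∫ x : ℝ, F (S * x)) = ((S : ℂ))⁻¹ := by
      rw [Measure.integral_comp_mul_left F S, hFone, abs_of_pos (inv_pos.mpr hS),
        Complex.real_smul, mul_one]
      push_cast
      ring
    rw [hone, Fintype.card_fin]
  have hmain : (S ^ (k+1) • ∫ a : Fin (k+1) → ℝ, (∏ j, F (S * a j)) •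
        (exp (Complex.I • A a) * P * exp (-(Complex.I • A a)))) - P
      = S ^ (k+1) • ∫ a : Fin (k+1) → ℝ, (∏ j, F (S * a j)) •
          (exp (Complex.I • A a) * P * exp (-(Complex.I • A a)) - P) := by
    rw [hsplit, smul_add, hconstint]
    have h5 : S ^ (k+1) • ((((S : ℂ)⁻¹) ^ (k+1)) • P) = P := by
      rw [← smul_assoc]
      have h6 : (S ^ (k+1) : ℝ) • (((S : ℂ)⁻¹) ^ (k+1)) = (1 : ℂ) := by
        have hSC : (S : ℂ) ≠ 0 := Complex.ofReal_ne_zero.mpr hS0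
        rw [Complex.real_smul]
        push_cast
        rw [← mul_pow, mul_inv_cancel₀ hSC, one_pow]
      rw [h6, one_smul]
    rw [h5, add_sub_cancel_right]
  rw [hmain]
  have hns : ‖S ^ (k+1) • ∫ a : Fin (k+1) → ℝ, (∏ j, F (S * a j)) •
        (exp (Complex.I • A a) * P * exp (-(Complex.I • A a)) - P)‖
      = S ^ (k+1) * ‖∫ a : Fin (k+1) → ℝ, (∏ j, F (S * a j)) •
        (exp (Complex.I • A a) * P * exp (-(Complex.I • A a)) - P)‖ := by
    have h := norm_smul (S ^ (k+1)) (∫ a : Fin (k+1) → ℝ, (∏ j, F (S * a j)) •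
        (exp (Complex.I • A a) * P * exp (-(Complex.I • A a)) - P))
    rw [Real.norm_eq_abs, abs_of_pos (pow_pos hS _)] at h
    exact h
  rw [hns]
  -- the dominating function
  set φ : Fin (k+1) → Fin (k+1) → ℝ → ℝ :=
    fun j i t => (if i = j then |t| else 1) * ‖F (S * t)‖ with hφ
  have hFSabs : Integrable fun t : ℝ => ‖F (S * t)‖ := by
    simpa using hFS.norm
  have hFSmom : Integrable fun t : ℝ => |t| * ‖F (S * t)‖ := by
    have h0 : Integrable fun t : ℝ => |S * t| * ‖F (S * t)‖ :=
      hFmom.comp_mul_left' hS0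
    refine (h0.const_mul S⁻¹).congr (Filter.Eventually.of_forall fun t => ?_)
    show S⁻¹ * (|S * t| * ‖F (S * t)‖) = |t| * ‖F (S * t)‖
    rw [abs_mul, abs_of_pos hS]
    field_simp
  have hφint : ∀ j i, Integrable (φ j i) := by
    intro j i
    rw [hφ]
    by_cases h : i = j
    · simpa [h] using hFSmom
    · simpa [h] using hFSabs
  have hφprod : ∀ j, Integrable (fun a : Fin (k+1) → ℝ => ∏ i, φ j i (a i)) :=
    fun j => Integrable.fintype_prod fun i => hφint j i
  have hbound_int : Integrable (fun a : Fin (k+1) → ℝ => ε * ∑ j, ∏ i, φ j i (a i)) :=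
    (integrable_finset_sum _ fun j _ => hφprod j).const_mul ε
  have h2 : ∀ (a : Fin (k+1) → ℝ) (j : Fin (k+1)),
      ∏ i, φ j i (a i) = |a j| * ∏ i, ‖F (S * a i)‖ := by
    intro a j
    rw [hφ]
    dsimp only
    rw [Finset.prod_mul_distrib]
    congr 1
    simp
  have hptwise : ∀ a : Fin (k+1) → ℝ,
      ‖(∏ j, F (S * a j)) • (exp (Complex.I • A a) * P * exp (-(Complex.I • A a)) - P)‖
        ≤ ε * ∑ j, ∏ i, φ j i (a i) := by
    intro a
    refine (le_of_eq (norm_smul (∏ j, F (S * a j)) (exp (Complex.I • A a) * P * exp (-(Complex.I • A a)) - P))).trans ?_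
    have h1 : ‖∏ j, F (S * a j)‖ = ∏ j, ‖F (S * a j)‖ := by
      rw [norm_prod]
    calc ‖∏ j, F (S * a j)‖ * ‖exp (Complex.I • A a) * P * exp (-(Complex.I • A a)) - P‖
        ≤ (∏ j, ‖F (S * a j)‖) * (ε * ∑ j, |a j|) := by
          rw [h1]
          exact mul_le_mul_of_nonneg_left (hUb a)
            (Finset.prod_nonneg fun i _ => norm_nonneg _)
      _ = ε * ∑ j, ∏ i, φ j i (a i) := by
          simp only [h2, Finset.mul_sum]
          exact Finset.sum_congr rfl fun j _ => by ring
  have hnormle : ‖∫ a : Fin (k+1) → ℝ, (∏ j, F (S * a j)) •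
        (exp (Complex.I • A a) * P * exp (-(Complex.I • A a)) - P)‖
      ≤ ∫ a : Fin (k+1) → ℝ, ε * ∑ j, ∏ i, φ j i (a i) :=
    norm_integral_le_of_norm_le hbound_int (Filter.Eventually.of_forall hptwise)
  -- computation of the dominating integral
  have hI0 : (∫ t : ℝ, ‖F (S * t)‖) = S⁻¹ * M0 := by
    rw [hM0, Measure.integral_comp_mul_left (fun t => ‖F t‖) S,
      smul_eq_mul, abs_of_pos (inv_pos.mpr hS)]
  have hI1 : (∫ t : ℝ, |t| * ‖F (S * t)‖) = S⁻¹ * (S⁻¹ * M1) := by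
    have h0 : (fun t : ℝ => |t| * ‖F (S * t)‖)
        = fun t : ℝ => S⁻¹ * ((fun u : ℝ => |u| * ‖F u‖) (S * t)) := by
      funext t
      dsimp only
      rw [abs_mul, abs_of_pos hS]
      field_simp
    rw [h0, integral_const_mul,
      Measure.integral_comp_mul_left (fun u : ℝ => |u| * ‖F u‖) S,
      smul_eq_mul, abs_of_pos (inv_pos.mpr hS), hM1]
  have hper : ∀ j : Fin (k+1), (∫ a : Fin (k+1) → ℝ, ∏ i, φ j i (a i))
      = (S⁻¹ * (S⁻¹ * M1)) * (S⁻¹ * M0) ^ k := by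
    intro j
    rw [volume_pi, integral_fintype_prod_eq_prod (ι := Fin (k+1)) (fun i => φ j i)]
    rw [← Finset.mul_prod_erase Finset.univ _ (Finset.mem_univ j)]
    have e1 : (∫ t : ℝ, φ j j t) = S⁻¹ * (S⁻¹ * M1) := by
      rw [hφ]
      simp only [if_pos rfl]
      exact hI1
    have e2 : ∀ i ∈ Finset.univ.erase j, (∫ t : ℝ, φ j i t) = S⁻¹ * M0 := by
      intro i hi
      have hij : i ≠ j := Finset.ne_of_mem_erase hi
      rw [hφ]
      simp only [if_neg hij, one_mul]
      exact hI0
    rw [e1, Finset.prod_congr rfl e2, Finset.prod_const,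
      Finset.card_erase_of_mem (Finset.mem_univ j), Finset.card_univ, Fintype.card_fin,
      Nat.add_sub_cancel]
  have hIntSum : (∫ a : Fin (k+1) → ℝ, ε * ∑ j, ∏ i, φ j i (a i))
      = ε * ((k+1 : ℝ) * ((S⁻¹ * (S⁻¹ * M1)) * (S⁻¹ * M0) ^ k)) := by
    rw [integral_const_mul, integral_finset_sum _ fun j _ => hφprod j]
    simp only [hper]
    rw [Finset.sum_const, Finset.card_univ, Fintype.card_fin, nsmul_eq_mul]
    push_cast
    ring
  calc S ^ (k+1) * ‖∫ a : Fin (k+1) → ℝ, (∏ j, F (S * a j)) •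
        (exp (Complex.I • A a) * P * exp (-(Complex.I • A a)) - P)‖
      ≤ S ^ (k+1) * (∫ a : Fin (k+1) → ℝ, ε * ∑ j, ∏ i, φ j i (a i)) :=
        mul_le_mul_of_nonneg_left hnormle (le_of_lt (pow_pos hS _))
    _ = ((k+1 : ℝ) * ε / S) * M1 * M0 ^ k := by
        rw [hIntSum, mul_pow, inv_pow]
        field_simp
        ring

set_option maxHeartbeats 1000000 in
set_option synthInstance.maxHeartbeats 1000000 in
theorem stmt9 {N m : ℕ}
    (X : Fin m → (EuclideanSpace ℂ (Fin N) →L[ℂ] EuclideanSpace ℂ (Fin N)))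
    (hXsa : ∀ j, IsSelfAdjoint (X j))
    (P : EuclideanSpace ℂ (Fin N) →L[ℂ] EuclideanSpace ℂ (Fin N))
    (S : ℝ) (hS : 0 < S)
    (F : ℝ → ℂ) (hFint : Integrable F)
    (hFone : ∫ t : ℝ, F t = 1)
    (hFmom : Integrable (fun t : ℝ => |t| * ‖F t‖))
    (ε : ℝ) (hPX : ∀ j, ‖P * X j - X j * P‖ ≤ ε) :
    ‖(S ^ m • ∫ a : Fin m → ℝ, (∏ j, F (S * a j)) •
        (NormedSpace.exp (Complex.I • ∑ j, (a j : ℂ) • X j) * P *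
          NormedSpace.exp (-(Complex.I • ∑ j, (a j : ℂ) • X j)))) - P‖
      ≤ (m * ε / S) * (∫ t : ℝ, |t| * ‖F t‖) *
          (∫ t : ℝ, ‖F t‖) ^ (m - 1) := by
  rcases Nat.eq_zero_or_pos m with hm0 | hm0
  · subst hm0
    simp only [pow_zero, Finset.univ_eq_empty, Finset.prod_empty, Finset.sum_empty, smul_zero,
      neg_zero, NormedSpace.exp_zero, one_mul, mul_one, one_smul, integral_const,
      Nat.cast_zero, zero_mul, zero_div]
    simp [MeasureTheory.volume_pi, Measure.real, Measure.pi_univ]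
  · obtain ⟨k, rfl⟩ : ∃ k, m = k + 1 := ⟨m - 1, (Nat.succ_pred_eq_of_pos hm0).symm⟩
    have hAsa : ∀ a : Fin (k+1) → ℝ, IsSelfAdjoint (∑ j, (a j : ℂ) • X j) := by
      intro a
      show star _ = _
      refine (star_sum (R := EuclideanSpace ℂ (Fin N) →L[ℂ] EuclideanSpace ℂ (Fin N))
        Finset.univ _).trans ?_
      refine Finset.sum_congr rfl fun j _ => ?_
      refine (star_smul _ _).trans ?_
      rw [Complex.star_def, Complex.conj_ofReal, (hXsa j).star_eq]
    have hAcont : Continuous fun a : Fin (k+1) → ℝ => ∑ j, (a j : ℂ) • X j :=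
      continuous_finset_sum _ fun j _ =>
        (Complex.continuous_ofReal.comp (continuous_apply j)).smul continuous_const
    have hAcomm : ∀ a : Fin (k+1) → ℝ,
        ‖P * (∑ j, (a j : ℂ) • X j) - (∑ j, (a j : ℂ) • X j) * P‖ ≤ ε * ∑ j, |a j| := by
      intro a
      have h1 : P * (∑ j, (a j : ℂ) • X j) - (∑ j, (a j : ℂ) • X j) * P
          = ∑ j, (a j : ℂ) • (P * X j - X j * P) := by
        rw [Finset.mul_sum, Finset.sum_mul, ← Finset.sum_sub_distrib]
        exact Finset.sum_congr rfl fun j _ => by rw [mul_smul_comm, smul_mul_assoc, smul_sub]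
      rw [h1, Finset.mul_sum]
      refine (norm_sum_le _ _).trans (Finset.sum_le_sum fun j _ => ?_)
      refine (le_of_eq (norm_smul ((a j : ℂ)) (P * X j - X j * P))).trans ?_
      rw [Complex.norm_real, Real.norm_eq_abs, mul_comm ε _]
      exact mul_le_mul_of_nonneg_left (hPX j) (abs_nonneg _)
    have h := stmt9_aux P S hS F hFint hFone hFmom ε
      (fun a : Fin (k+1) → ℝ => ∑ j, (a j : ℂ) • X j) hAsa hAcont hAcomm
    simpa only [Nat.cast_add, Nat.cast_one, Nat.add_sub_cancel] using h
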